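/- Let A ∈ ℝ^{m×n}, b ∈ ℝ^m, L ∈ ℝ^{s×n} with full column rank, and {W_i}_{i=1}^{M} with Σ_{i=1}^{M} W_i W_iᵀ = I_m. Let τ(1), τ(2), … be i.i.d. uniform on {1,…,M}. Fix λ > 0 and define y_k = (λLᵀL + Σ_{i=1}^{k} A_{τ(i)}ᵀA_{τ(i)})^{-1}(Σ_{i=1}^{k} A_{τ(i)}ᵀ b_{τ(i)} + λLᵀL y_0). If A has full column rank, then y_k → (AᵀA)^{-1}Aᵀb almost surely as k → ∞. -/

import Mathlib

open Matrix Finset Filter MeasureTheory ProbabilityTheory Topology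

lemma rrls_isUnit_of_rank_eq {k : ℕ} {M : Matrix (Fin k) (Fin k) ℝ} (h : M.rank = k) :
    IsUnit M := by
  rw [← Matrix.mulVec_surjective_iff_isUnit]
  have h1 : LinearMap.range M.mulVecLin = ⊤ := by
    apply Submodule.eq_top_of_finrank_eq
    simpa [Matrix.rank] using h
  intro v
  obtain ⟨w, hw⟩ := (LinearMap.range_eq_top.mp h1) v
  exact ⟨w, hw⟩

lemma rrls_sum_mulVec {a b : ℕ} {ι : Type*} (s : Finset ι)
    (C : ι → Matrix (Fin a) (Fin b) ℝ) (v : Fin b → ℝ) :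
    (∑ i ∈ s, C i) *ᵥ v = ∑ i ∈ s, C i *ᵥ v := by
  induction s using Finset.cons_induction with
  | empty => simp
  | cons i s hi ih => simp [Matrix.add_mulVec, ih]

lemma rrls_inv_smul {k : ℕ} (c : ℝ) (hc : c ≠ 0) {B : Matrix (Fin k) (Fin k) ℝ}
    (hB : IsUnit B.det) : (c • B)⁻¹ = c⁻¹ • B⁻¹ := by
  apply Matrix.inv_eq_right_inv
  rw [Matrix.smul_mul, Matrix.mul_smul, smul_smul, Matrix.mul_nonsing_inv _ hB,
    mul_inv_cancel₀ hc, one_smul]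

lemma rrls_slln {M : ℕ} (hM : 0 < M)
    {Ω : Type*} [MeasurableSpace Ω] (μ : Measure Ω) [IsProbabilityMeasure μ]
    (τ : ℕ → Ω → Fin M) (hmeas : ∀ k, Measurable (τ k))
    (hindep : iIndepFun τ μ)
    (hunif : ∀ k, ∀ i : Fin M, μ (τ k ⁻¹' {i}) = (M : ENNReal)⁻¹)
    (g : Fin M → ℝ) :
    ∀ᵐ ω ∂μ, Tendsto (fun k => (∑ i ∈ Finset.range k, g (τ i ω)) / k) atTop
      (𝓝 ((M : ℝ)⁻¹ * ∑ i, g i)) := by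
  have mg : Measurable g := measurable_of_countable g
  set X : ℕ → Ω → ℝ := fun i ω => g (τ i ω) with hX
  have hX0 : Measurable (X 0) := mg.comp (hmeas 0)
  have hint : Integrable (X 0) μ := by
    refine (integrable_const (∑ i, |g i|)).mono' hX0.aestronglyMeasurable ?_
    filter_upwards with ω
    simp only [Real.norm_eq_abs, X]
    exact Finset.single_le_sum (f := fun i => |g i|) (fun i _ => abs_nonneg _)
      (Finset.mem_univ _)
  have hident : ∀ i, IdentDistrib (X i) (X 0) μ μ := by
    intro i
    have h' : IdentDistrib (τ i) (τ 0) μ μ := by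
      refine ⟨(hmeas i).aemeasurable, (hmeas 0).aemeasurable, ?_⟩
      rw [MeasureTheory.Measure.ext_iff_singleton]
      intro a
      rw [Measure.map_apply (hmeas i) (measurableSet_singleton a),
        Measure.map_apply (hmeas 0) (measurableSet_singleton a), hunif, hunif]
    exact h'.comp mg
  have hindep' : Pairwise (Function.onFun (IndepFun · · μ) X) := fun i j hij =>
    (hindep.indepFun hij).comp mg mg
  have h := strong_law_ae_real X hint hindep' hident
  have hmean : μ[X 0] = (M : ℝ)⁻¹ * ∑ i, g i := by
    have h1 : μ[X 0] = ∫ a, g a ∂(Measure.map (τ 0) μ) :=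
      (integral_map (hmeas 0).aemeasurable mg.aestronglyMeasurable).symm
    haveI : IsProbabilityMeasure (Measure.map (τ 0) μ) :=
      Measure.isProbabilityMeasure_map (hmeas 0).aemeasurable
    rw [h1, integral_fintype .of_finite]
    have h2 : ∀ a : Fin M, (Measure.map (τ 0) μ) {a} = (M : ENNReal)⁻¹ := fun a => by
      rw [Measure.map_apply (hmeas 0) (measurableSet_singleton a), hunif]
    simp only [Measure.real, h2, Finset.mul_sum, smul_eq_mul]
    refine Finset.sum_congr rfl fun a _ => ?_
    rw [ENNReal.toReal_inv, ENNReal.toReal_natCast]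
  rw [← hmean]
  exact h

lemma rrls_posdef_smul {n s : ℕ} {L : Matrix (Fin s) (Fin n) ℝ} (hL : L.rank = n)
    {lam : ℝ} (hlam : 0 < lam) : (lam • (Lᵀ * L)).PosDef := by
  have hLL : IsUnit (Lᵀ * L) :=
    rrls_isUnit_of_rank_eq (by rw [Matrix.rank_transpose_mul_self, hL])
  have hLinj : Function.Injective (Lᵀ * L).mulVec :=
    Matrix.mulVec_injective_iff_isUnit.mpr hLL
  rw [Matrix.posDef_iff_dotProduct_mulVec]
  constructor
  · have h1 := Matrix.isHermitian_conjTranspose_mul_self L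
    rw [Matrix.conjTranspose_eq_transpose_of_trivial] at h1
    rw [Matrix.IsHermitian, Matrix.conjTranspose_smul, star_trivial,
      Matrix.conjTranspose_eq_transpose_of_trivial]
    rw [Matrix.IsHermitian, Matrix.conjTranspose_eq_transpose_of_trivial] at h1
    rw [h1]
  · intro x hx
    have hLLx : (Lᵀ * L) *ᵥ x ≠ 0 := by
      intro h0
      exact hx (hLinj (h0.trans (Matrix.mulVec_zero _).symm))
    have hLx : L *ᵥ x ≠ 0 := by
      intro h0
      apply hLLx
      rw [← Matrix.mulVec_mulVec, h0, Matrix.mulVec_zero]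
    have key : star x ⬝ᵥ ((lam • (Lᵀ * L)) *ᵥ x) = lam * ((L *ᵥ x) ⬝ᵥ (L *ᵥ x)) := by
      rw [Matrix.smul_mulVec, dotProduct_smul, smul_eq_mul, star_trivial,
        ← Matrix.mulVec_mulVec, Matrix.dotProduct_mulVec, Matrix.vecMul_transpose]
    rw [key]
    refine mul_pos hlam (lt_of_le_of_ne ?_ ?_)
    · exact Finset.sum_nonneg fun i _ => mul_self_nonneg _
    · intro h0
      exact hLx (dotProduct_self_eq_zero.mp h0.symm)

lemma rrls_posdef_B {n s ℓ : ℕ} {L : Matrix (Fin s) (Fin n) ℝ} (hL : L.rank = n)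
    {lam : ℝ} (hlam : 0 < lam) {ι : Type*} (t : Finset ι)
    (C : ι → Matrix (Fin ℓ) (Fin n) ℝ) :
    (lam • (Lᵀ * L) + ∑ i ∈ t, (C i)ᵀ * C i).PosDef := by
  refine (rrls_posdef_smul hL hlam).add_posSemidef ?_
  refine Finset.sum_induction _ _ (fun a b ha hb => ha.add hb) .zero fun i _ => ?_
  have := Matrix.posSemidef_conjTranspose_mul_self (C i)
  rwa [Matrix.conjTranspose_eq_transpose_of_trivial] at this

/-- with i.i.d. uniform sampling indices, the rrls iterates converge almost
surely to the unregularized least-squares solution `(AᵀA)⁻¹Aᵀb` when `A` has full column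
rank. -/
theorem rrls_random_sampling_as_convergence
    {m n s ℓ M : ℕ} (hM : 0 < M)
    (A : Matrix (Fin m) (Fin n) ℝ) (hA : A.rank = n) (b : Fin m → ℝ)
    (L : Matrix (Fin s) (Fin n) ℝ) (hL : L.rank = n)
    (W : Fin M → Matrix (Fin m) (Fin ℓ) ℝ)
    (hW : ∑ i, W i * (W i)ᵀ = (1 : Matrix (Fin m) (Fin m) ℝ))
    (Ai : Fin M → Matrix (Fin ℓ) (Fin n) ℝ) (hAi : ∀ i, Ai i = (W i)ᵀ * A)
    (bi : Fin M → Fin ℓ → ℝ) (hbi : ∀ i, bi i = (W i)ᵀ.mulVec b)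
    (lam : ℝ) (hlam : 0 < lam) (y0 : Fin n → ℝ)
    {Ω : Type*} [MeasurableSpace Ω] (μ : Measure Ω) [IsProbabilityMeasure μ]
    (τ : ℕ → Ω → Fin M) (hmeas : ∀ k, Measurable (τ k))
    (hindep : iIndepFun τ μ)
    (hunif : ∀ k, ∀ i : Fin M, μ (τ k ⁻¹' {i}) = (M : ENNReal)⁻¹)
    (y : ℕ → Ω → Fin n → ℝ)
    (hy : ∀ k ω, y k ω =
      (lam • (Lᵀ * L) + ∑ i ∈ Finset.range k, (Ai (τ i ω))ᵀ * Ai (τ i ω))⁻¹.mulVec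
        ((∑ i ∈ Finset.range k, (Ai (τ i ω))ᵀ.mulVec (bi (τ i ω)))
          + lam • (Lᵀ * L).mulVec y0)) :
    ∀ᵐ ω ∂μ, Tendsto (fun k => y k ω) atTop
      (nhds ((Aᵀ * A)⁻¹.mulVec (Aᵀ.mulVec b))) := by
  have hMne : (M : ℝ) ≠ 0 := Nat.cast_ne_zero.mpr hM.ne'
  have hAunit : IsUnit (Aᵀ * A) :=
    rrls_isUnit_of_rank_eq (by rw [Matrix.rank_transpose_mul_self, hA])
  have hAdet : IsUnit (Aᵀ * A).det := (Matrix.isUnit_iff_isUnit_det _).mp hAunit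
  have hsum : ∑ i, (Ai i)ᵀ * Ai i = Aᵀ * A := by
    calc ∑ i, (Ai i)ᵀ * Ai i = ∑ i, Aᵀ * ((W i * (W i)ᵀ) * A) := by
          simp [hAi, Matrix.transpose_mul, Matrix.transpose_transpose, Matrix.mul_assoc]
      _ = Aᵀ * ((∑ i, W i * (W i)ᵀ) * A) := by
          rw [Matrix.sum_mul, Matrix.mul_sum]
      _ = Aᵀ * A := by rw [hW, Matrix.one_mul]
  have hsumv : ∑ i, (Ai i)ᵀ *ᵥ bi i = Aᵀ *ᵥ b := by
    have h1 : ∀ i : Fin M, (Ai i)ᵀ *ᵥ bi i = (Aᵀ * (W i * (W i)ᵀ)) *ᵥ b := by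
      intro i
      rw [hAi, hbi, Matrix.transpose_mul, Matrix.transpose_transpose]
      rw [Matrix.mulVec_mulVec, Matrix.mul_assoc]
    calc ∑ i, (Ai i)ᵀ *ᵥ bi i = ∑ i, (Aᵀ * (W i * (W i)ᵀ)) *ᵥ b :=
          Finset.sum_congr rfl fun i _ => h1 i
      _ = (∑ i, Aᵀ * (W i * (W i)ᵀ)) *ᵥ b := (rrls_sum_mulVec _ _ _).symm
      _ = (Aᵀ * ∑ i, W i * (W i)ᵀ) *ᵥ b := by rw [Matrix.mul_sum]
      _ = Aᵀ *ᵥ b := by rw [hW, Matrix.mul_one]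
  have HS : ∀ᵐ ω ∂μ, ∀ p q : Fin n, Tendsto
      (fun k => (∑ i ∈ Finset.range k, ((Ai (τ i ω))ᵀ * Ai (τ i ω)) p q) / k) atTop
      (𝓝 ((M : ℝ)⁻¹ * (Aᵀ * A) p q)) := by
    rw [ae_all_iff]; intro p; rw [ae_all_iff]; intro q
    have e : ∑ i, ((Ai i)ᵀ * Ai i) p q = (Aᵀ * A) p q := by
      rw [← hsum, Matrix.sum_apply]
    have := rrls_slln hM μ τ hmeas hindep hunif (fun i => ((Ai i)ᵀ * Ai i) p q)
    rw [e] at this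
    exact this
  have Ht : ∀ᵐ ω ∂μ, ∀ q : Fin n, Tendsto
      (fun k => (∑ i ∈ Finset.range k, ((Ai (τ i ω))ᵀ *ᵥ bi (τ i ω)) q) / k) atTop
      (𝓝 ((M : ℝ)⁻¹ * (Aᵀ *ᵥ b) q)) := by
    rw [ae_all_iff]; intro q
    have e : ∑ i, ((Ai i)ᵀ *ᵥ bi i) q = (Aᵀ *ᵥ b) q := by
      rw [← hsumv, Finset.sum_apply]
    have := rrls_slln hM μ τ hmeas hindep hunif (fun i => ((Ai i)ᵀ *ᵥ bi i) q)
    rw [e] at this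
    exact this
  filter_upwards [HS, Ht] with ω hSω htω
  set B : ℕ → Matrix (Fin n) (Fin n) ℝ :=
    fun k => lam • (Lᵀ * L) + ∑ i ∈ Finset.range k, (Ai (τ i ω))ᵀ * Ai (τ i ω) with hBdef
  set c : ℕ → Fin n → ℝ :=
    fun k => (∑ i ∈ Finset.range k, (Ai (τ i ω))ᵀ *ᵥ bi (τ i ω))
      + lam • (Lᵀ * L) *ᵥ y0 with hcdef
  have hBdet : ∀ k, IsUnit (B k).det := fun k =>
    isUnit_iff_ne_zero.mpr (rrls_posdef_B hL hlam _ _).det_pos.ne'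
  have hStend : Tendsto (fun k : ℕ => (k : ℝ)⁻¹ • B k) atTop (𝓝 ((M : ℝ)⁻¹ • (Aᵀ * A))) := by
    refine tendsto_pi_nhds.mpr fun p => tendsto_pi_nhds.mpr fun q => ?_
    have h1 : ∀ k : ℕ, ((k : ℝ)⁻¹ • B k) p q =
        (k : ℝ)⁻¹ * (lam * (Lᵀ * L) p q)
          + (∑ i ∈ Finset.range k, ((Ai (τ i ω))ᵀ * Ai (τ i ω)) p q) / k := by
      intro k
      simp only [hBdef, Matrix.smul_apply, Matrix.add_apply, Matrix.sum_apply,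
        smul_eq_mul, div_eq_inv_mul]
      ring
    have h2 : Tendsto (fun k : ℕ =>
        (k : ℝ)⁻¹ * (lam * (Lᵀ * L) p q)
          + (∑ i ∈ Finset.range k, ((Ai (τ i ω))ᵀ * Ai (τ i ω)) p q) / k) atTop
        (𝓝 (0 * (lam * (Lᵀ * L) p q) + (M : ℝ)⁻¹ * (Aᵀ * A) p q)) :=
      (tendsto_inv_atTop_nhds_zero_nat.mul_const _).add (hSω p q)
    rw [zero_mul, zero_add] at h2
    exact Tendsto.congr (fun k => (h1 k).symm) h2
  have httend : Tendsto (fun k : ℕ => (k : ℝ)⁻¹ • c k) atTop (𝓝 ((M : ℝ)⁻¹ • (Aᵀ *ᵥ b))) := by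
    rw [tendsto_pi_nhds]; intro q
    have h1 : ∀ k : ℕ, ((k : ℝ)⁻¹ • c k) q =
        (∑ i ∈ Finset.range k, ((Ai (τ i ω))ᵀ *ᵥ bi (τ i ω)) q) / k
          + (k : ℝ)⁻¹ * (lam * ((Lᵀ * L) *ᵥ y0) q) := by
      intro k
      simp only [hcdef, Pi.smul_apply, Pi.add_apply, Finset.sum_apply,
        smul_eq_mul, div_eq_inv_mul]
      ring
    have h2 : Tendsto (fun k : ℕ =>
        (∑ i ∈ Finset.range k, ((Ai (τ i ω))ᵀ *ᵥ bi (τ i ω)) q) / k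
          + (k : ℝ)⁻¹ * (lam * ((Lᵀ * L) *ᵥ y0) q)) atTop
        (𝓝 ((M : ℝ)⁻¹ * (Aᵀ *ᵥ b) q + 0 * (lam * ((Lᵀ * L) *ᵥ y0) q))) :=
      (htω q).add (tendsto_inv_atTop_nhds_zero_nat.mul_const _)
    rw [zero_mul, add_zero] at h2
    exact Tendsto.congr (fun k => (h1 k).symm) h2
  have hdetS : ((M : ℝ)⁻¹ • (Aᵀ * A)).det ≠ 0 := by
    rw [Matrix.det_smul]
    exact mul_ne_zero (pow_ne_zero _ (inv_ne_zero hMne)) hAdet.ne_zero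
  have hinv : Tendsto (fun k : ℕ => ((k : ℝ)⁻¹ • B k)⁻¹) atTop
      (𝓝 (((M : ℝ)⁻¹ • (Aᵀ * A))⁻¹)) := by
    have hc : ContinuousAt Inv.inv ((M : ℝ)⁻¹ • (Aᵀ * A)) :=
      continuousAt_matrix_inv _ (by rw [Ring.inverse_eq_inv']; exact continuousAt_inv₀ hdetS)
    exact hc.tendsto.comp hStend
  have hmv : Tendsto (fun k : ℕ => ((k : ℝ)⁻¹ • B k)⁻¹ *ᵥ ((k : ℝ)⁻¹ • c k)) atTop
      (𝓝 (((M : ℝ)⁻¹ • (Aᵀ * A))⁻¹ *ᵥ ((M : ℝ)⁻¹ • (Aᵀ *ᵥ b)))) := by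
    have hcont : Continuous fun p : Matrix (Fin n) (Fin n) ℝ × (Fin n → ℝ) =>
        p.1 *ᵥ p.2 := Continuous.matrix_mulVec continuous_fst continuous_snd
    exact (hcont.tendsto _).comp (hinv.prodMk_nhds httend)
  have hlim : ((M : ℝ)⁻¹ • (Aᵀ * A))⁻¹ *ᵥ ((M : ℝ)⁻¹ • (Aᵀ *ᵥ b))
      = (Aᵀ * A)⁻¹ *ᵥ (Aᵀ *ᵥ b) := by
    rw [rrls_inv_smul _ (inv_ne_zero hMne) hAdet, inv_inv, Matrix.smul_mulVec,
      Matrix.mulVec_smul, smul_smul, mul_inv_cancel₀ hMne, one_smul]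
  have heq : ∀ᶠ k : ℕ in atTop, ((k : ℝ)⁻¹ • B k)⁻¹ *ᵥ ((k : ℝ)⁻¹ • c k) = y k ω := by
    filter_upwards [eventually_ge_atTop 1] with k hk
    have hk0 : (k : ℝ) ≠ 0 := Nat.cast_ne_zero.mpr (Nat.one_le_iff_ne_zero.mp hk)
    rw [hy k ω]
    show ((k : ℝ)⁻¹ • B k)⁻¹ *ᵥ ((k : ℝ)⁻¹ • c k) = (B k)⁻¹ *ᵥ c k
    rw [rrls_inv_smul _ (inv_ne_zero hk0) (hBdet k), inv_inv, Matrix.smul_mulVec,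
      Matrix.mulVec_smul, smul_smul, mul_inv_cancel₀ hk0, one_smul]
  rw [hlim] at hmv
  exact hmv.congr' heq
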